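/- For every (a,b) ∈ 𝓘 with a + 1 < b, there exist an integer l ≥ 1 and a strictly increasing sequence c : Fin (l+1) → ℕ with c 0 = a+1 and c l = b, such that (c s, c (s+1)) ∈ 𝓘 for every s < l, and such that the set of sources of edges with aim (a,b) is exactly { (c s, c (s+1)) : s < l } (i.e. (a',b') ∈ 𝓘 has an edge to (a,b) if and only if (a',b') = (c s, c (s+1)) for some s < l). -/

import Mathlib

/-- The set of flooded-cavern intervals: pairs `(a,b)` with `i ≤ a < b ≤ j`,
`g t ≥ g a` for all `a ≤ t < b`, and `g a > g b`. -/
def FCI (i j : ℕ) (g : ℕ → ℕ) : Set (ℕ × ℕ) :=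
  {p | i ≤ p.1 ∧ p.1 < p.2 ∧ p.2 ≤ j ∧
    (∀ t, p.1 ≤ t → t < p.2 → g p.1 ≤ g t) ∧ g p.2 < g p.1}

/-- Strict containment of intervals: `[p.1, p.2] ⊊ [q.1, q.2]`. -/
def StrictSub (p q : ℕ × ℕ) : Prop := q.1 ≤ p.1 ∧ p.2 ≤ q.2 ∧ p ≠ q

/-- The edge relation of the flooded cavern tree: an edge from `p` to `q` when both belong
to `𝓘`, `p` is strictly contained in `q`, and no element of `𝓘` lies strictly between. -/
def FCIEdge (i j : ℕ) (g : ℕ → ℕ) (p q : ℕ × ℕ) : Prop :=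
  p ∈ FCI i j g ∧ q ∈ FCI i j g ∧ StrictSub p q ∧
    ¬ ∃ r ∈ FCI i j g, StrictSub p r ∧ StrictSub r q


theorem stmt5 (i j : ℕ) (g : ℕ → ℕ) (hij : i < j)
    (hgi : ∀ t, i ≤ t → t < j → g i ≤ g t) (hgj : g j < g i)
    (p : ℕ × ℕ) (hp : p ∈ FCI i j g) (hlt : p.1 + 1 < p.2) :
    ∃ l : ℕ, 1 ≤ l ∧ ∃ c : Fin (l + 1) → ℕ, StrictMono c ∧
      c 0 = p.1 + 1 ∧ c (Fin.last l) = p.2 ∧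
      (∀ s : Fin l, (c s.castSucc, c s.succ) ∈ FCI i j g) ∧
      (∀ q : ℕ × ℕ, FCIEdge i j g q p ↔ ∃ s : Fin l, q = (c s.castSucc, c s.succ)) := by
  obtain ⟨hpi, hab, hbj, hmin, hdrop⟩ := hp
  classical
  set a := p.1 with ha
  set b := p.2 with hb
  set C : Finset ℕ := (Finset.Icc (a+1) b).filter
    (fun t => ∀ u ∈ Finset.Ico (a+1) t, g t < g u) with hCdef
  have hmemC : ∀ t, t ∈ C ↔ (a+1 ≤ t ∧ t ≤ b ∧ ∀ u, a+1 ≤ u → u < t → g t < g u) := by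
    intro t
    simp only [hCdef, Finset.mem_filter, Finset.mem_Icc, Finset.mem_Ico, and_assoc]
    tauto
  have hA1 : a + 1 ∈ C := by
    rw [hmemC]; exact ⟨le_refl _, by omega, fun u hu1 hu2 => by omega⟩
  have hB : b ∈ C := by
    rw [hmemC]
    refine ⟨by omega, le_refl _, fun u hu1 hu2 => ?_⟩
    exact lt_of_lt_of_le hdrop (hmin u (by omega) hu2)
  have hcard2 : 1 < C.card := Finset.one_lt_card.mpr ⟨a+1, hA1, b, hB, by omega⟩
  refine ⟨C.card - 1, by omega, ?_⟩
  have hcard : C.card = (C.card - 1) + 1 := by omega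
  set l := C.card - 1 with hl
  set e := C.orderIsoOfFin hcard with he
  set c : Fin (l+1) → ℕ := fun s => (e s : ℕ) with hc
  have hcmem : ∀ s, c s ∈ C := fun s => (e s).2
  have hcmono : StrictMono c := fun s t h => Subtype.coe_lt_coe.mpr (e.strictMono h)
  have hcsurj : ∀ x ∈ C, ∃ s, c s = x := by
    intro x hx
    exact ⟨e.symm ⟨x, hx⟩, by simp [hc]⟩
  have hc0 : c 0 = a + 1 := by
    obtain ⟨s, hs⟩ := hcsurj _ hA1
    have h1 : c 0 ≤ c s := hcmono.monotone (Fin.zero_le s)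
    have h2 : a + 1 ≤ c 0 := ((hmemC _).mp (hcmem 0)).1
    omega
  have hclast : c (Fin.last l) = b := by
    obtain ⟨s, hs⟩ := hcsurj _ hB
    have h1 : c s ≤ c (Fin.last l) := hcmono.monotone (Fin.le_last s)
    have h2 : c (Fin.last l) ≤ b := ((hmemC _).mp (hcmem _)).2.1
    omega
  -- no chain point strictly between consecutive ones
  have hnoC : ∀ s : Fin l, ∀ t, c s.castSucc < t → t < c s.succ → t ∉ C := by
    intro s t h1 h2 ht
    obtain ⟨r, hr⟩ := hcsurj t ht
    rw [← hr] at h1 h2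
    have := hcmono.lt_iff_lt.mp h1
    have := hcmono.lt_iff_lt.mp h2
    simp [Fin.lt_def] at *
    omega
  have hchain : ∀ s : Fin l, (c s.castSucc, c s.succ) ∈ FCI i j g := by
    intro s
    have hm1 := (hmemC _).mp (hcmem s.castSucc)
    have hm2 := (hmemC _).mp (hcmem s.succ)
    have hlt2 : c s.castSucc < c s.succ := hcmono Fin.castSucc_lt_succ
    refine ⟨by omega, hlt2, by omega, ?_, ?_⟩
    · -- min property
      intro t ht1 ht2
      dsimp only at ht1 ht2
      by_contra hcon
      dsimp only at hcon
      push_neg at hcon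
      -- minimal bad t
      have hex : ∃ t, c s.castSucc ≤ t ∧ t < c s.succ ∧ g t < g (c s.castSucc) :=
        ⟨t, ht1, ht2, hcon⟩
      obtain ⟨hT1, hT2, hT3⟩ := Nat.find_spec hex
      have hTmin : ∀ m, m < Nat.find hex → ¬ (c s.castSucc ≤ m ∧ m < c s.succ ∧ g m < g (c s.castSucc)) :=
        fun m hm => Nat.find_min hex hm
      set T := Nat.find hex with hTdef
      have hTne : c s.castSucc < T :=
        lt_of_le_of_ne hT1 (fun h => by rw [← h] at hT3; omega)
      have hTC : T ∈ C := by
        rw [hmemC]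
        refine ⟨by omega, by omega, fun u hu1 hu2 => ?_⟩
        rcases Nat.lt_or_ge u (c s.castSucc) with h | h
        · have := hm1.2.2 u hu1 h
          omega
        · rcases Nat.eq_or_lt_of_le h with h' | h'
          · rw [← h']; exact hT3
          · have : ¬ (c s.castSucc ≤ u ∧ u < c s.succ ∧ g u < g (c s.castSucc)) :=
              hTmin u hu2
            push_neg at this
            have := this (by omega) (by omega)
            omega
      exact hnoC s T hTne hT2 hTC
    · exact hm2.2.2 (c s.castSucc) hm1.1 hlt2
  -- covering lemma
  have hcover : ∀ q : ℕ × ℕ, q ∈ FCI i j g → a + 1 ≤ q.1 → q.2 ≤ b →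
      ∃ s : Fin l, c s.castSucc ≤ q.1 ∧ q.2 ≤ c s.succ := by
    intro q hq hq1 hq2
    obtain ⟨_, hq12, _, hqmin, hqdrop⟩ := hq
    set S : Finset (Fin (l+1)) := Finset.univ.filter (fun s => c s ≤ q.1) with hS
    have hSne : S.Nonempty := ⟨0, by simp [hS, hc0]; omega⟩
    set s0 := S.max' hSne with hs0
    have hs0mem : c s0 ≤ q.1 := by
      have := S.max'_mem hSne
      simpa [hS] using this
    have hs0lt : s0.val < l := by
      by_contra h
      have : s0 = Fin.last l := by
        apply Fin.ext; simp [Fin.last]; omega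
      rw [this] at hs0mem
      omega
    set s : Fin l := ⟨s0.val, hs0lt⟩ with hsdef
    have hscs : s.castSucc = s0 := by apply Fin.ext; simp [hsdef]
    have hnext : ¬ (c s.succ ≤ q.1) := by
      intro h
      have hmem : s.succ ∈ S := by simp [hS, h]
      have := S.le_max' _ hmem
      rw [← hs0] at this
      have : (s.succ : Fin (l+1)) ≤ s0 := this
      rw [← hscs] at this
      have h2 : s.castSucc < s.succ := Fin.castSucc_lt_succ
      exact absurd (lt_of_lt_of_le h2 this) (lt_irrefl _)
    push_neg at hnext
    refine ⟨s, by rw [hscs]; exact hs0mem, ?_⟩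
    by_contra hcon
    push_neg at hcon
    have h1 : g q.1 ≤ g (c s.succ) := hqmin (c s.succ) (by omega) hcon
    obtain ⟨_, _, _, hsmin, hsdrop⟩ := hchain s
    have h2 : g (c s.castSucc) ≤ g q.1 := hsmin q.1 (by rw [hscs]; exact hs0mem) hnext
    simp only at hsdrop
    omega
  -- strict sub of p gives bounds
  have hsub : ∀ q : ℕ × ℕ, q ∈ FCI i j g → StrictSub q p → a + 1 ≤ q.1 ∧ q.2 ≤ b := by
    intro q hq ⟨hss1, hss2, hss3⟩
    obtain ⟨_, hq12, _, hqmin, hqdrop⟩ := hq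
    refine ⟨?_, hss2⟩
    rcases Nat.eq_or_lt_of_le hss1 with h | h
    · exfalso
      rcases Nat.eq_or_lt_of_le hss2 with h2 | h2
      · exact hss3 (Prod.ext h.symm h2)
      · have h3 := hmin q.2 (by omega) h2
        rw [← ha] at h
        rw [← h] at hqdrop
        omega
    · omega
  have hchainsub : ∀ s : Fin l, StrictSub (c s.castSucc, c s.succ) p := by
    intro s
    have hm1 := (hmemC _).mp (hcmem s.castSucc)
    have hm2 := (hmemC _).mp (hcmem s.succ)
    refine ⟨by rw [← ha]; omega, by rw [← hb]; exact hm2.2.1, fun h => ?_⟩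
    have h1 := congrArg Prod.fst h
    simp only at h1
    rw [← ha] at h1
    omega
  refine ⟨c, hcmono, hc0, hclast, hchain, fun q => ⟨?_, ?_⟩⟩
  · rintro ⟨hq, _, hss, hno⟩
    obtain ⟨hb1, hb2⟩ := hsub q hq hss
    obtain ⟨s, hs1, hs2⟩ := hcover q hq hb1 hb2
    by_cases heq : q = (c s.castSucc, c s.succ)
    · exact ⟨s, heq⟩
    · exfalso
      exact hno ⟨(c s.castSucc, c s.succ), hchain s, ⟨hs1, hs2, heq⟩, hchainsub s⟩
  · rintro ⟨s, rfl⟩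
    refine ⟨hchain s, ⟨hpi, hab, hbj, hmin, hdrop⟩, hchainsub s, ?_⟩
    rintro ⟨r, hr, ⟨hr1, hr2, hrne⟩, hrp⟩
    obtain ⟨hb1, hb2⟩ := hsub r hr hrp
    obtain ⟨t, ht1, ht2⟩ := hcover r hr hb1 hb2
    simp only at hr1 hr2
    have hts : t.castSucc ≤ s.castSucc := hcmono.le_iff_le.mp (le_trans ht1 hr1)
    have hst : s.succ ≤ t.succ := hcmono.le_iff_le.mp (le_trans hr2 ht2)
    have hts' : t = s := by
      exact le_antisymm (Fin.castSucc_le_castSucc_iff.mp hts) (Fin.succ_le_succ_iff.mp hst)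
    subst hts'
    apply hrne
    have e1 : r.1 = c t.castSucc := le_antisymm hr1 ht1
    have e2 : r.2 = c t.succ := le_antisymm ht2 hr2
    exact Prod.ext e1.symm e2.symm
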